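/- Let Q, Q′ be t×t positive semidefinite complex matrices and H ∈ ℂ^{t×r}. Then |log det(I_r + Hᴴ Q′ H) − log det(I_r + Hᴴ Q H)| ≤ r^{3/2} · ‖Q′ − Q‖_F · ‖H‖_F². -/

import Mathlib

open Matrix
open scoped ComplexOrder

noncomputable section

/-- The Frobenius norm of a complex matrix. -/
def frob {m k : Type*} [Fintype m] [Fintype k] (A : Matrix m k ℂ) : ℝ :=
  Real.sqrt (∑ i, ∑ j, ‖A i j‖ ^ 2)

end

attribute [local instance] Matrix.frobeniusSeminormedAddCommGroup

lemma frob_eq {m k : Type*} [Fintype m] [Fintype k] (A : Matrix m k ℂ) : frob A = ‖A‖ := by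
  rw [frob, Matrix.frobenius_norm_def, Real.sqrt_eq_rpow]
  congr 1
  refine Finset.sum_congr rfl fun i _ => Finset.sum_congr rfl fun j _ => ?_
  simp [Real.rpow_two]

lemma frob_nonneg {m k : Type*} [Fintype m] [Fintype k] (A : Matrix m k ℂ) : 0 ≤ frob A :=
  Real.sqrt_nonneg _

lemma herm_dot_im {n : Type*} [Fintype n] {N : Matrix n n ℂ} (hN : N.IsHermitian)
    (x : n → ℂ) : (star x ⬝ᵥ N *ᵥ x).im = 0 := by
  have h : star x ⬝ᵥ N *ᵥ x = star (star x ⬝ᵥ N *ᵥ x) := by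
    conv_lhs => rw [star_dotProduct]
    congr 1
    rw [star_mulVec, hN.eq, ← dotProduct_mulVec]
  have := congrArg Complex.im h
  simp only [Complex.star_def, Complex.conj_im] at this
  linarith

lemma quad_re_le {n : Type*} [Fintype n] (M : Matrix n n ℂ) (x : n → ℂ) :
    (star x ⬝ᵥ M *ᵥ x).re ≤ frob M * (star x ⬝ᵥ x).re := by
  classical
  set F : n × n → ℝ := fun p => ‖M p.1 p.2‖ with hF
  set G : n × n → ℝ := fun p => ‖x p.1‖ * ‖x p.2‖ with hG
  have hxx : (star x ⬝ᵥ x).re = ∑ i, ‖x i‖ ^ 2 := by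
    rw [dotProduct, Complex.re_sum]
    refine Finset.sum_congr rfl fun i _ => ?_
    simp [Complex.sq_norm, Complex.normSq_apply, Complex.mul_re]
  have h1 : (star x ⬝ᵥ M *ᵥ x).re ≤ ‖star x ⬝ᵥ M *ᵥ x‖ := Complex.re_le_norm _
  have h2 : ‖star x ⬝ᵥ M *ᵥ x‖ ≤ ∑ p : n × n, F p * G p := by
    rw [dotProduct]
    refine (norm_sum_le _ _).trans ?_
    rw [← Finset.univ_product_univ, Finset.sum_product]
    refine Finset.sum_le_sum fun i _ => ?_
    calc ‖star x i * (M *ᵥ x) i‖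
        = ‖x i‖ * ‖(M *ᵥ x) i‖ := by
          rw [norm_mul]; simp
      _ ≤ ‖x i‖ * ∑ j, ‖M i j‖ * ‖x j‖ := by
          refine mul_le_mul_of_nonneg_left ?_ (norm_nonneg _)
          rw [Matrix.mulVec, dotProduct]
          refine (norm_sum_le _ _).trans ?_
          refine le_of_eq (Finset.sum_congr rfl fun j _ => norm_mul _ _)
      _ = ∑ j, F (i, j) * G (i, j) := by
          rw [Finset.mul_sum]
          refine Finset.sum_congr rfl fun j _ => ?_
          simp [hF, hG]; ring
  have hCS := Finset.sum_mul_sq_le_sq_mul_sq Finset.univ F G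
  have hFG0 : 0 ≤ ∑ p : n × n, F p * G p :=
    Finset.sum_nonneg fun p _ => mul_nonneg (norm_nonneg _)
      (mul_nonneg (norm_nonneg _) (norm_nonneg _))
  have h3 : ∑ p : n × n, F p * G p
      ≤ Real.sqrt (∑ p : n × n, F p ^ 2) * Real.sqrt (∑ p : n × n, G p ^ 2) := by
    rw [← Real.sqrt_mul (Finset.sum_nonneg fun p _ => sq_nonneg _)]
    rw [← Real.sqrt_sq hFG0]
    exact Real.sqrt_le_sqrt hCS
  have hFfrob : Real.sqrt (∑ p : n × n, F p ^ 2) = frob M := by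
    rw [frob, ← Finset.univ_product_univ, Finset.sum_product]
  have hGx : Real.sqrt (∑ p : n × n, G p ^ 2) = ∑ i, ‖x i‖ ^ 2 := by
    have : ∑ p : n × n, G p ^ 2 = (∑ i, ‖x i‖ ^ 2) ^ 2 := by
      rw [sq, Finset.sum_mul_sum, ← Finset.univ_product_univ, Finset.sum_product]
      refine Finset.sum_congr rfl fun i _ => Finset.sum_congr rfl fun j _ => ?_
      simp [hG]; ring
    rw [this, Real.sqrt_sq (Finset.sum_nonneg fun i _ => sq_nonneg _)]
  calc (star x ⬝ᵥ M *ᵥ x).re ≤ ∑ p : n × n, F p * G p := h1.trans h2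
    _ ≤ _ := by rw [hxx]; rw [hFfrob, hGx] at h3; exact h3

lemma psd_smul {n : Type*} [Fintype n] {A : Matrix n n ℂ} (hA : A.PosSemidef)
    {c : ℝ} (hc : 0 ≤ c) : ((c : ℂ) • A).PosSemidef := by
  refine PosSemidef.of_dotProduct_mulVec_nonneg ?_ ?_
  · have := hA.1
    rw [Matrix.IsHermitian, conjTranspose_smul, this.eq]
    congr 1
    simp [Complex.star_def, Complex.conj_ofReal]
  · intro x
    rw [smul_mulVec, dotProduct_smul, smul_eq_mul]
    exact mul_nonneg (by exact_mod_cast hc) (hA.dotProduct_mulVec_nonneg x)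

lemma smul_one_sub_psd {n : Type*} [Fintype n] [DecidableEq n] {M : Matrix n n ℂ}
    (hM : M.IsHermitian) {c : ℝ} (hc : frob M ≤ c) : ((c : ℂ) • 1 - M).PosSemidef := by
  have hH : ((c : ℂ) • 1 - M).IsHermitian := by
    rw [Matrix.IsHermitian, conjTranspose_sub, conjTranspose_smul, hM.eq, conjTranspose_one]
    congr 2
    simp [Complex.star_def, Complex.conj_ofReal]
  refine PosSemidef.of_dotProduct_mulVec_nonneg hH fun x => ?_
  have hexp : star x ⬝ᵥ ((c : ℂ) • 1 - M) *ᵥ x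
      = (c : ℂ) * (star x ⬝ᵥ x) - star x ⬝ᵥ M *ᵥ x := by
    rw [sub_mulVec, dotProduct_sub, smul_mulVec, one_mulVec, dotProduct_smul, smul_eq_mul]
  rw [Complex.le_def, hexp]
  have hxx0 : 0 ≤ (star x ⬝ᵥ x).re := by
    have := (Matrix.PosSemidef.one (n := n) (R := ℂ)).re_dotProduct_nonneg x
    simpa using this
  have hxxim : (star x ⬝ᵥ x).im = 0 := by
    have := herm_dot_im (isHermitian_one (n := n) (α := ℂ)) x
    rwa [one_mulVec] at this
  have hMim : (star x ⬝ᵥ M *ᵥ x).im = 0 := herm_dot_im hM x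
  constructor
  · simp only [Complex.zero_re, Complex.sub_re, Complex.mul_re, Complex.ofReal_re,
      Complex.ofReal_im, hxxim, mul_zero, zero_mul, sub_zero]
    have h1 := quad_re_le M x
    nlinarith [frob_nonneg M, mul_le_mul_of_nonneg_right hc hxx0]
  · simp [Complex.sub_im, Complex.mul_im, hxxim, hMim]

lemma det_one_add_psd {n : ℕ} {P : Matrix (Fin n) (Fin n) ℂ} (hP : P.PosSemidef) :
    1 ≤ ((1 + P).det).re ∧ ((1 + P).det).im = 0 := by
  have hD : (1 + P).IsHermitian := isHermitian_one.add hP.1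
  have heig : ∀ i, 1 ≤ hD.eigenvalues i := by
    intro i
    rw [hD.eigenvalues_eq]
    set v := hD.eigenvectorBasis i with hv
    have hnorm : ‖v‖ = 1 := hD.eigenvectorBasis.orthonormal.1 i
    have hvv : (star ⇑v ⬝ᵥ ⇑v) = (1 : ℂ) := by
      rw [dotProduct_comm, ← EuclideanSpace.inner_eq_star_dotProduct, inner_self_eq_norm_sq_to_K, hnorm]
      norm_num
    rw [add_mulVec, one_mulVec, dotProduct_add, map_add, hvv]
    have h2 := hP.re_dotProduct_nonneg ⇑v
    have : RCLike.re (1 : ℂ) = 1 := by simp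
    rw [this]
    linarith
  have hdet : (1 + P).det = ((∏ i, hD.eigenvalues i : ℝ) : ℂ) := by
    rw [hD.det_eq_prod_eigenvalues]
    push_cast
    rfl
  rw [hdet]
  refine ⟨?_, Complex.ofReal_im _⟩
  rw [Complex.ofReal_re]
  calc (1:ℝ) = ∏ _i : Fin n, 1 := by simp
    _ ≤ ∏ i, hD.eigenvalues i :=
      Finset.prod_le_prod (fun i _ => zero_le_one) (fun i _ => heig i)

open scoped MatrixOrder in
lemma det_re_le {n : ℕ} {B C : Matrix (Fin n) (Fin n) ℂ}
    (hB : B.PosDef) (hCB : (C - B).PosSemidef) : (B.det).re ≤ (C.det).re := by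
  classical
  set S := CFC.sqrt B with hSdef
  have hS : S.PosSemidef := (CFC.sqrt_nonneg B).posSemidef
  have hSS : S * S = B := CFC.sqrt_mul_sqrt_self B hB.posSemidef.nonneg
  have hdetB : (0 : ℂ) < B.det := hB.det_pos
  have hdetS : S.det ≠ 0 := by
    intro h
    have : B.det = 0 := by rw [← hSS, det_mul, h, mul_zero]
    rw [this] at hdetB
    exact lt_irrefl _ hdetB
  have hSunit : IsUnit S.det := IsUnit.mk0 _ hdetS
  have hTS : S⁻¹ * S = 1 := nonsing_inv_mul S hSunit
  have hST : S * S⁻¹ = 1 := mul_nonsing_inv S hSunit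
  have hTherm : (S⁻¹)ᴴ = S⁻¹ := by
    rw [Matrix.conjTranspose_nonsing_inv, hS.1.eq]
  set P := S⁻¹ * (C - B) * (S⁻¹)ᴴ with hPdef
  have hPpsd : P.PosSemidef := hCB.mul_mul_conjTranspose_same S⁻¹
  have hC : C = S * (1 + P) * S := by
    rw [hPdef, hTherm]
    have h1 : S * (1 + S⁻¹ * (C - B) * S⁻¹) * S
        = S * S + (S * S⁻¹) * (C - B) * (S⁻¹ * S) := by
      noncomm_ring
    rw [h1, hST, hTS, hSS, one_mul, mul_one, add_sub_cancel]
  have hdet : C.det = B.det * (1 + P).det := by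
    rw [hC, det_mul, det_mul, ← hSS, det_mul]
    ring
  obtain ⟨h1, h2⟩ := det_one_add_psd hPpsd
  have hBre : 0 < (B.det).re ∧ (B.det).im = 0 := by
    rw [Complex.lt_def] at hdetB
    exact ⟨by simpa using hdetB.1, by simpa using hdetB.2.symm⟩
  rw [hdet, Complex.mul_re, hBre.2, zero_mul, sub_zero]
  nlinarith [hBre.1, h1]

lemma log_det_dir {t r : ℕ}
    (Q Q' : Matrix (Fin t) (Fin t) ℂ) (hQ : Q.PosSemidef) (hQ' : Q'.PosSemidef)
    (H : Matrix (Fin t) (Fin r) ℂ) :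
    Real.log (((1 : Matrix (Fin r) (Fin r) ℂ) + Hᴴ * Q' * H).det).re
      ≤ Real.log (((1 : Matrix (Fin r) (Fin r) ℂ) + Hᴴ * Q * H).det).re
        + r * (frob (Q' - Q) * frob H ^ 2) := by
  classical
  set c : ℝ := frob (Q' - Q) * frob H ^ 2 with hc
  have hc0 : 0 ≤ c := mul_nonneg (frob_nonneg _) (sq_nonneg _)
  set A : Matrix (Fin r) (Fin r) ℂ := Hᴴ * Q * H with hA
  set A' : Matrix (Fin r) (Fin r) ℂ := Hᴴ * Q' * H with hA'
  set M : Matrix (Fin r) (Fin r) ℂ := Hᴴ * (Q' - Q) * H with hM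
  have hApsd : A.PosSemidef := hQ.conjTranspose_mul_mul_same H
  have hA'psd : A'.PosSemidef := hQ'.conjTranspose_mul_mul_same H
  have hMherm : M.IsHermitian := by
    have hD : (Q' - Q).IsHermitian := hQ'.1.sub hQ.1
    rw [Matrix.IsHermitian, hM]
    rw [conjTranspose_mul, conjTranspose_mul, conjTranspose_conjTranspose, hD.eq, ← Matrix.mul_assoc]
  have hMfrob : frob M ≤ c := by
    rw [hc, frob_eq, frob_eq, frob_eq]
    calc ‖Hᴴ * (Q' - Q) * H‖ ≤ ‖Hᴴ * (Q' - Q)‖ * ‖H‖ := Matrix.frobenius_norm_mul _ _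
      _ ≤ (‖Hᴴ‖ * ‖Q' - Q‖) * ‖H‖ :=
          mul_le_mul_of_nonneg_right (Matrix.frobenius_norm_mul _ _) (norm_nonneg _)
      _ = ‖Q' - Q‖ * ‖H‖ ^ 2 := by
          rw [Matrix.frobenius_norm_conjTranspose]; ring
  have hMA : M = A' - A := by
    rw [hM, hA, hA', Matrix.mul_sub, Matrix.sub_mul]
  have hNeq : (((1 + c : ℝ) : ℂ) • (1 + A)) - (1 + A')
      = (((c : ℝ) : ℂ) • 1 - M) + ((c : ℝ) : ℂ) • A := by
    rw [hMA]
    have : ((1 + c : ℝ) : ℂ) = 1 + ((c : ℝ) : ℂ) := by push_cast; ring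
    rw [this]
    module
  have hNpsd : ((((1 + c : ℝ) : ℂ) • (1 + A)) - (1 + A')).PosSemidef := by
    rw [hNeq]
    exact (smul_one_sub_psd hMherm hMfrob).add (psd_smul hApsd hc0)
  have hBpd : (1 + A).PosDef := Matrix.PosDef.one.add_posSemidef hApsd
  have hB'pd : (1 + A').PosDef := Matrix.PosDef.one.add_posSemidef hA'psd
  have hmono : ((1 + A').det).re ≤ ((((1 + c : ℝ) : ℂ) • (1 + A)).det).re :=
    det_re_le hB'pd hNpsd
  have hdetsmul : ((((1 + c : ℝ) : ℂ) • (1 + A)).det).re = (1 + c) ^ r * ((1 + A).det).re := by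
    have hpow : (((1 + c : ℝ) : ℂ)) ^ r = (((1 + c) ^ r : ℝ) : ℂ) := by push_cast; ring
    rw [Matrix.det_smul, Fintype.card_fin, hpow, Complex.mul_re, Complex.ofReal_re,
      Complex.ofReal_im, zero_mul, sub_zero]
  have hBpos : 0 < ((1 + A).det).re := by
    have := hBpd.det_pos
    rw [Complex.lt_def] at this
    simpa using this.1
  have hB'pos : 0 < ((1 + A').det).re := by
    have := hB'pd.det_pos
    rw [Complex.lt_def] at this
    simpa using this.1
  have h1c : (0:ℝ) < 1 + c := by linarith
  calc Real.log ((1 + A').det).re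
      ≤ Real.log ((1 + c) ^ r * ((1 + A).det).re) := by
        refine Real.log_le_log hB'pos ?_
        rw [← hdetsmul]; exact hmono
    _ = r * Real.log (1 + c) + Real.log ((1 + A).det).re := by
        rw [Real.log_mul (by positivity) (ne_of_gt hBpos), Real.log_pow]
    _ ≤ Real.log ((1 + A).det).re + r * c := by
        have hlog : Real.log (1 + c) ≤ c := by
          have := Real.log_le_sub_one_of_pos h1c
          linarith
        have : (r : ℝ) * Real.log (1 + c) ≤ r * c :=
          mul_le_mul_of_nonneg_left hlog (Nat.cast_nonneg r)
        linarith

/-- Lipschitz-type bound: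
`|log det(I + HᴴQ′H) − log det(I + HᴴQH)| ≤ r^{3/2} ‖Q′−Q‖_F ‖H‖_F²`. -/
theorem abs_log_det_sub_log_det_le {t r : ℕ}
    (Q Q' : Matrix (Fin t) (Fin t) ℂ) (hQ : Q.PosSemidef) (hQ' : Q'.PosSemidef)
    (H : Matrix (Fin t) (Fin r) ℂ) :
    |Real.log (((1 : Matrix (Fin r) (Fin r) ℂ) + Hᴴ * Q' * H).det).re
        - Real.log (((1 : Matrix (Fin r) (Fin r) ℂ) + Hᴴ * Q * H).det).re|
      ≤ (r : ℝ) ^ ((3 : ℝ) / 2) * frob (Q' - Q) * frob H ^ 2 := by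
  have hsymm : frob (Q - Q') = frob (Q' - Q) := by
    rw [frob_eq, frob_eq, norm_sub_rev]
  have h1 := log_det_dir Q Q' hQ hQ' H
  have h2 := log_det_dir Q' Q hQ' hQ H
  rw [hsymm] at h2
  set c : ℝ := frob (Q' - Q) * frob H ^ 2 with hc
  have hc0 : 0 ≤ c := mul_nonneg (frob_nonneg _) (sq_nonneg _)
  have habs : |Real.log (((1 : Matrix (Fin r) (Fin r) ℂ) + Hᴴ * Q' * H).det).re
      - Real.log (((1 : Matrix (Fin r) (Fin r) ℂ) + Hᴴ * Q * H).det).re| ≤ r * c := by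
    rw [abs_sub_le_iff]
    constructor <;> linarith
  refine habs.trans ?_
  have hrc : (r : ℝ) * c ≤ (r : ℝ) ^ ((3 : ℝ) / 2) * c := by
    rcases Nat.eq_zero_or_pos r with hr | hr
    · subst hr; simp
    · refine mul_le_mul_of_nonneg_right ?_ hc0
      have hr1 : (1 : ℝ) ≤ (r : ℝ) := by exact_mod_cast hr
      calc (r : ℝ) = (r : ℝ) ^ (1 : ℝ) := (Real.rpow_one _).symm
        _ ≤ (r : ℝ) ^ ((3 : ℝ) / 2) :=
          Real.rpow_le_rpow_of_exponent_le hr1 (by norm_num)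
  calc (r : ℝ) * c ≤ (r : ℝ) ^ ((3 : ℝ) / 2) * c := hrc
    _ = (r : ℝ) ^ ((3 : ℝ) / 2) * frob (Q' - Q) * frob H ^ 2 := by rw [hc]; ring
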